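/- arXiv:2504.14518 — 4 statements merged into one kernel-verified Lean document; each statement's English description precedes it below -/
import Mathlib

section
/- There are no positive integers α and z such that 64 − 5^α = 3·z^2, and there are no positive integers α and z such that 5^α − 64 = 3·z^2. -/
theorem stmt_6 :
    (¬ ∃ α z : ℕ, 0 < α ∧ 0 < z ∧ (64 : ℤ) - 5 ^ α = 3 * (z : ℤ) ^ 2) ∧
    (¬ ∃ α z : ℕ, 0 < α ∧ 0 < z ∧ (5 : ℤ) ^ α - 64 = 3 * (z : ℤ) ^ 2) := by
  constructor <;> rintro ⟨α, z, hα, hz, h⟩ <;>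
  · have := congrArg (Int.cast : ℤ → ZMod 5) h
    push_cast at this
    rw [show ((5 : ZMod 5)) = 0 by decide, zero_pow hα.ne'] at this
    revert this
    exact fun hc => by
      have key : ∀ w : ZMod 5, ¬ ((64 : ZMod 5) - 0 = 3 * w ^ 2 ∨ (0 : ZMod 5) - 64 = 3 * w ^ 2) := by decide
      exact key _ (by first | exact Or.inl hc | exact Or.inr hc)
end

section
/- There are no positive integers α and z such that 5^α + 64 = 3·z^2. -/
theorem stmt_7 : ¬ ∃ α z : ℕ, 0 < α ∧ 0 < z ∧ 5 ^ α + 64 = 3 * z ^ 2 := by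
  rintro ⟨α, z, hα, hz, h⟩
  rcases Nat.even_or_odd α with ⟨k, hk⟩ | ⟨k, hk⟩
  · -- α even: contradiction mod 3
    subst hk
    have hpow : 5 ^ (k + k) = 25 ^ k := by
      rw [pow_add, ← mul_pow]; norm_num
    have h25 : 25 ^ k % 3 = 1 := by
      rw [Nat.pow_mod]; simp
    have h3 : 3 * z ^ 2 % 3 = 0 := Nat.mul_mod_right 3 _
    omega
  · -- α odd: contradiction mod 8
    subst hk
    have hpow : 5 ^ (2 * k + 1) = 5 * 25 ^ k := by
      rw [pow_succ, pow_mul]; ring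
    have h25 : 25 ^ k % 8 = 1 := by
      rw [Nat.pow_mod]; simp
    have hL : (5 * 25 ^ k) % 8 = 5 := by
      rw [Nat.mul_mod, h25]
    have hsq : z ^ 2 % 8 = (z % 8) ^ 2 % 8 := Nat.pow_mod z 2 8
    have hr : z % 8 < 8 := Nat.mod_lt _ (by norm_num)
    have key : ∀ r < 8, 3 * (r ^ 2 % 8) % 8 ≠ 5 := by decide
    have h8 : 3 * z ^ 2 % 8 = 3 * (z ^ 2 % 8) % 8 := by
      conv_lhs => rw [Nat.mul_mod]
    rw [hpow] at h
    have := key (z % 8) hr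
    omega
end

section
/- There is no positive integer α and integer z such that 2^α + 27 = 7·z^3, and there is no positive integer α and integer z such that 2^α − 27 = 7·z^3. -/
lemma pow_two_mod63 (n : ℕ) : (2 : ZMod 63) ^ n = 2 ^ (n % 6) := by
  conv_lhs => rw [← Nat.mod_add_div n 6]
  have : (2 : ZMod 63) ^ 6 = 1 := by decide
  rw [pow_add, pow_mul, this, one_pow, mul_one]

lemma key1 (m : ℕ) (hm : m < 6) (w : ZMod 63) : (2 : ZMod 63) ^ m + 27 ≠ 7 * w ^ 3 := by
  revert w
  interval_cases m <;> decide

lemma key2 (m : ℕ) (hm : m < 6) (w : ZMod 63) : (2 : ZMod 63) ^ m - 27 ≠ 7 * w ^ 3 := by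
  revert w
  interval_cases m <;> decide

theorem stmt_8 :
    (¬ ∃ (α : ℕ) (z : ℤ), 0 < α ∧ (2 : ℤ) ^ α + 27 = 7 * z ^ 3) ∧
    (¬ ∃ (α : ℕ) (z : ℤ), 0 < α ∧ (2 : ℤ) ^ α - 27 = 7 * z ^ 3) := by
  constructor <;> rintro ⟨α, z, hα, h⟩
  · have h63 := congrArg (fun t : ℤ => (t : ZMod 63)) h
    push_cast at h63
    rw [pow_two_mod63] at h63
    exact key1 (α % 6) (Nat.mod_lt _ (by norm_num)) (z : ZMod 63) h63
  · have h63 := congrArg (fun t : ℤ => (t : ZMod 63)) h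
    push_cast at h63
    rw [pow_two_mod63] at h63
    exact key2 (α % 6) (Nat.mod_lt _ (by norm_num)) (z : ZMod 63) h63
end

section
/- There is no positive integer α and integer z such that 2^α + 27 = 13·z^3, and there is no positive integer α and integer z such that 2^α − 27 = 13·z^3. -/
lemma aux9 : ∀ r < 12, ∀ w : ZMod 117,
    (2 : ZMod 117) ^ r + 27 ≠ 13 * w ^ 3 ∧ (2 : ZMod 117) ^ r - 27 ≠ 13 * w ^ 3 := by
  set_option maxRecDepth 10000 in decide

lemma pow_red (α : ℕ) : (2 : ZMod 117) ^ α = 2 ^ (α % 12) := by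
  conv_lhs => rw [← Nat.div_add_mod α 12]
  rw [pow_add, pow_mul]
  have : (2 : ZMod 117) ^ 12 = 1 := by decide
  rw [this, one_pow, one_mul]

theorem stmt_9 :
    (¬ ∃ (α : ℕ) (z : ℤ), 0 < α ∧ (2 : ℤ) ^ α + 27 = 13 * z ^ 3) ∧
    (¬ ∃ (α : ℕ) (z : ℤ), 0 < α ∧ (2 : ℤ) ^ α - 27 = 13 * z ^ 3) := by
  constructor
  · rintro ⟨α, z, -, h⟩
    have h' := congrArg (Int.cast : ℤ → ZMod 117) h
    push_cast at h'
    rw [pow_red] at h'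
    exact (aux9 _ (Nat.mod_lt _ (by norm_num)) ((z : ZMod 117))).1 h'
  · rintro ⟨α, z, -, h⟩
    have h' := congrArg (Int.cast : ℤ → ZMod 117) h
    push_cast at h'
    rw [pow_red] at h'
    exact (aux9 _ (Nat.mod_lt _ (by norm_num)) ((z : ZMod 117))).2 h'
end
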